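/- Let Σ_x be a real symmetric d×d matrix with orthogonal eigenspace decomposition ℝ^d = V₁ ⊕ … ⊕ V_r into eigenspaces with pairwise distinct eigenvalues, and let 𝒢 = {G ∈ O(d) : Gᵀ Σ_x G = Σ_x}. If a real symmetric d×d matrix Σ_w satisfies Gᵀ Σ_w G = Σ_w for every G ∈ 𝒢, then Σ_w is aligned with Σ_x, i.e., each eigenspace V_i of Σ_x is contained in an eigenspace of Σ_w. -/

import Mathlib

open Matrix

lemma lemA {d : ℕ} (Sx : Matrix (Fin d) (Fin d) ℝ) (v : Fin d → ℝ) (μ : ℝ)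
    (hv : Sx.mulVec v = μ • v) : Sx * vecMulVec v v = μ • vecMulVec v v := by
  ext i j
  have h1 := congrFun hv i
  simp [Matrix.mulVec, dotProduct] at h1
  simp only [Matrix.mul_apply, Matrix.vecMulVec_apply, Matrix.smul_apply, smul_eq_mul,
    ← mul_assoc, ← Finset.sum_mul, h1]

lemma lemB {d : ℕ} (v w : Fin d → ℝ) :
    (vecMulVec v v).mulVec w = (v ⬝ᵥ w) • v := by
  ext i
  simp only [Matrix.mulVec, dotProduct, Matrix.vecMulVec_apply, Pi.smul_apply, smul_eq_mul,
    Finset.sum_mul, ← Finset.mul_sum]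
  exact Finset.sum_congr rfl fun k _ => by ring

lemma lemC {d : ℕ} (v : Fin d → ℝ) :
    (vecMulVec v v) * (vecMulVec v v) = (v ⬝ᵥ v) • vecMulVec v v := by
  ext i j
  simp [Matrix.mul_apply, Matrix.vecMulVec_apply, dotProduct, Finset.sum_mul, Finset.mul_sum]
  congr 1; ext k; ring

lemma lemD {d : ℕ} (v : Fin d → ℝ) : (vecMulVec v v)ᵀ = vecMulVec v v := by
  ext i j; simp [Matrix.vecMulVec_apply, mul_comm]

lemma lemE {d : ℕ} (Sx : Matrix (Fin d) (Fin d) ℝ) (hx : Sx.IsSymm) (v : Fin d → ℝ) (μ : ℝ)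
    (hv : Sx.mulVec v = μ • v) : vecMulVec v v * Sx = μ • vecMulVec v v := by
  have := congrArg Matrix.transpose (lemA Sx v μ hv)
  rw [Matrix.transpose_mul, lemD, hx, Matrix.transpose_smul, lemD] at this
  exact this

lemma key {d : ℕ} (Sx Sw : Matrix (Fin d) (Fin d) ℝ) (hx : Sx.IsSymm)
    (h : ∀ G : Matrix (Fin d) (Fin d) ℝ, Gᵀ * G = 1 → Gᵀ * Sx * G = Sx →
      Gᵀ * Sw * G = Sw) (μ : ℝ) (v : Fin d → ℝ) (hv : Sx.mulVec v = μ • v) :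
    ∃ c : ℝ, Sw.mulVec v = c • v := by
  by_cases hv0 : v = 0
  · exact ⟨0, by simp [hv0]⟩
  have ht : (v ⬝ᵥ v) ≠ 0 := fun hvv => hv0 ((dotProduct_self_eq_zero (v := v)).mp hvv)
  set t : ℝ := v ⬝ᵥ v with htdef
  set a : ℝ := 2 / t with hadef
  set P : Matrix (Fin d) (Fin d) ℝ := vecMulVec v v with hP
  set G : Matrix (Fin d) (Fin d) ℝ := 1 - a • P with hG
  have hat : a * t = 2 := by rw [hadef]; field_simp
  have hPP : P * P = t • P := lemC v
  have hSxP : Sx * P = μ • P := lemA Sx v μ hv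
  have hPSx : P * Sx = μ • P := lemE Sx hx v μ hv
  have h2 : a • (t • P) = (2:ℝ) • P := by rw [smul_smul, hat]
  have hGT : Gᵀ = G := by
    rw [hG, Matrix.transpose_sub, Matrix.transpose_one, Matrix.transpose_smul, hP, lemD]
  have hGG : Gᵀ * G = 1 := by
    rw [hGT, hG]
    simp only [Matrix.sub_mul, Matrix.mul_sub, Matrix.one_mul, Matrix.mul_one,
      Matrix.smul_mul, Matrix.mul_smul, hPP, h2]
    module
  have hSxG : Gᵀ * Sx * G = Sx := by
    rw [hGT, hG]
    simp only [Matrix.sub_mul, Matrix.mul_sub, Matrix.one_mul, Matrix.mul_one,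
      Matrix.smul_mul, Matrix.mul_smul, hSxP, hPSx, hPP, smul_comm a μ, h2]
    module
  have hSw := h G hGG hSxG
  rw [hGT] at hSw
  have hGv : G.mulVec v = -v := by
    rw [hG, Matrix.sub_mulVec, Matrix.one_mulVec, Matrix.smul_mulVec, hP, lemB,
      ← htdef, smul_smul, hat]
    ext i; simp; ring
  set w : Fin d → ℝ := Sw.mulVec v with hwdef
  have hGw : G.mulVec w = w - (a * (v ⬝ᵥ w)) • v := by
    rw [hG, Matrix.sub_mulVec, Matrix.one_mulVec, Matrix.smul_mulVec, hP, lemB, smul_smul]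
  have heq : (G * Sw * G).mulVec v = w := by rw [hSw]
  rw [← Matrix.mulVec_mulVec, ← Matrix.mulVec_mulVec, hGv, Matrix.mulVec_neg, ← hwdef,
    Matrix.mulVec_neg, hGw] at heq
  refine ⟨(a * (v ⬝ᵥ w)) / 2, ?_⟩
  have h3 : (2:ℝ) • w = (a * (v ⬝ᵥ w)) • v := by
    ext i
    have := congrFun heq i
    simp at this ⊢
    linarith
  calc w = (2:ℝ)⁻¹ • ((2:ℝ) • w) := by rw [smul_smul]; norm_num
  _ = (a * (v ⬝ᵥ w) / 2) • v := by rw [h3, smul_smul]; ring_nf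

/-- Eigenspace of a `d × d` real matrix `A` for the (potential) eigenvalue `μ`. -/
noncomputable def eigSp {d : ℕ} (A : Matrix (Fin d) (Fin d) ℝ) (μ : ℝ) :
    Submodule ℝ (Fin d → ℝ) :=
  Module.End.eigenspace A.mulVecLin μ

/-- `A` is aligned with `B` if every eigenspace of `B` is contained in an eigenspace of `A`. -/
def IsAligned {d : ℕ} (A B : Matrix (Fin d) (Fin d) ℝ) : Prop :=
  ∀ μ : ℝ, ∃ ν : ℝ, eigSp B μ ≤ eigSp A ν

lemma mem_eigSp {d : ℕ} {A : Matrix (Fin d) (Fin d) ℝ} {μ : ℝ} {x : Fin d → ℝ} :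
    x ∈ eigSp A μ ↔ A.mulVec x = μ • x := by
  rw [eigSp, Module.End.mem_eigenspace_iff, Matrix.mulVecLin_apply]

/-- If a real symmetric matrix `Sw` is invariant under every orthogonal matrix
`G` that leaves the real symmetric matrix `Sx` invariant, then `Sw` is aligned with `Sx`. -/
theorem aligned_of_invariant_under_stabilizer {d : ℕ}
    (Sx Sw : Matrix (Fin d) (Fin d) ℝ) (hx : Sx.IsSymm) (hw : Sw.IsSymm)
    (h : ∀ G : Matrix (Fin d) (Fin d) ℝ, Gᵀ * G = 1 → Gᵀ * Sx * G = Sx →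
      Gᵀ * Sw * G = Sw) :
    IsAligned Sw Sx := by
  intro μ
  by_cases hne : ∃ v ∈ eigSp Sx μ, v ≠ 0
  · obtain ⟨v₀, hv₀, hv₀0⟩ := hne
    obtain ⟨c₀, hc₀⟩ := key Sx Sw hx h μ v₀ (mem_eigSp.mp hv₀)
    refine ⟨c₀, fun x hxmem => ?_⟩
    rw [mem_eigSp]
    by_cases hx0 : x = 0
    · simp [hx0]
    obtain ⟨c, hc⟩ := key Sx Sw hx h μ x (mem_eigSp.mp hxmem)
    obtain ⟨c', hc'⟩ := key Sx Sw hx h μ (x + v₀)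
      (mem_eigSp.mp (Submodule.add_mem _ hxmem hv₀))
    rw [Matrix.mulVec_add, hc, hc₀, smul_add] at hc'
    have hcomb : (c - c') • x = (c' - c₀) • v₀ := by
      ext i
      have := congrFun hc' i
      simp at this ⊢
      linarith
    by_cases hcc : c = c'
    · have : (c' - c₀) • v₀ = 0 := by rw [← hcomb, hcc]; simp
      have hcc0 : c' = c₀ := by
        rcases smul_eq_zero.mp this with h' | h'
        · linarith [sub_eq_zero.mp h']
        · exact absurd h' hv₀0
      rw [hc, hcc, hcc0]
    · have hxv : x = ((c' - c₀) / (c - c')) • v₀ := by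
        have hsub : c - c' ≠ 0 := sub_ne_zero.mpr hcc
        have := congrArg (fun y => (c - c')⁻¹ • y) hcomb
        simp only [smul_smul, inv_mul_cancel₀ hsub, one_smul] at this
        rw [this]; congr 1; field_simp
      rw [hxv, Matrix.mulVec_smul, hc₀, smul_smul, smul_smul, mul_comm]
  · refine ⟨0, fun x hxmem => ?_⟩
    rw [mem_eigSp]
    push_neg at hne
    rw [hne x hxmem]
    simp
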